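/- The polynomial 1 + x^3 + x^5 + x^8 cannot appear as a factor in any factorization ∏_{i=1}^m d_i(x) = ∑_{s=0}^{t} x^s where each d_i has coefficients in {0,1} and constant coefficient 1. -/
import Mathlib


open Polynomial Finset

theorem d3_not_in_fair_sack (m t : ℕ) (d : Fin m → ℝ[X])
    (hcoeff : ∀ i k, (d i).coeff k = 0 ∨ (d i).coeff k = 1)
    (h0 : ∀ i, (d i).coeff 0 = 1)
    (hprod : ∏ i, d i = ∑ s ∈ Finset.range (t + 1), (X : ℝ[X]) ^ s) :
    ∀ i, d i ≠ 1 + X ^ 3 + X ^ 5 + X ^ 8 := by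
  intro i hi
  set P : ℝ[X] := ∏ j ∈ Finset.univ.erase i, d j with hP
  have hsplit : ∏ j, d j = d i * P := (Finset.mul_prod_erase _ _ (mem_univ i)).symm
  -- nonnegativity of coefficients of P
  have hnonneg : ∀ k, 0 ≤ P.coeff k := by
    have := Finset.prod_induction (fun j => d j) (fun q : ℝ[X] => ∀ k, 0 ≤ q.coeff k)
      (fun p q hp hq k => by
        rw [Polynomial.coeff_mul]
        exact Finset.sum_nonneg fun ab _ => mul_nonneg (hp ab.1) (hq ab.2))
      (fun k => by simp [Polynomial.coeff_one]; positivity)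
      (fun j _ k => by rcases hcoeff j k with h | h <;> simp [h])
      (s := Finset.univ.erase i)
    exact this
  -- constant coefficient of P is 1
  have hP0 : P.coeff 0 = 1 := by
    have : Polynomial.constantCoeff P = ∏ j ∈ Finset.univ.erase i, Polynomial.constantCoeff (d j) :=
      map_prod Polynomial.constantCoeff _ _
    simpa [Polynomial.constantCoeff_apply, h0] using this
  -- coefficient expansion of (d i) * P
  have hexp : ∀ k, ((d i) * P).coeff k =
      P.coeff k + (if 3 ≤ k then P.coeff (k - 3) else 0)
      + (if 5 ≤ k then P.coeff (k - 5) else 0) + (if 8 ≤ k then P.coeff (k - 8) else 0) := by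
    intro k
    rw [hi, mul_comm]
    rw [mul_add, mul_add, mul_add, mul_one]
    simp [Polynomial.coeff_mul_X_pow']
  -- RHS coefficients
  have hR : ∀ k, (∑ s ∈ Finset.range (t + 1), (X : ℝ[X]) ^ s).coeff k
      = if k ≤ t then 1 else 0 := by
    intro k
    rw [Polynomial.finset_sum_coeff]
    simp [Polynomial.coeff_X_pow, Finset.sum_ite_eq, Nat.lt_succ_iff]
  have key : ∀ k, P.coeff k + (if 3 ≤ k then P.coeff (k - 3) else 0)
      + (if 5 ≤ k then P.coeff (k - 5) else 0) + (if 8 ≤ k then P.coeff (k - 8) else 0)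
      = if k ≤ t then 1 else 0 := by
    intro k
    rw [← hexp, ← hsplit, hprod, hR]
  have ht : 8 ≤ t := by
    by_contra h
    have h8 := key 8
    simp [Nat.le_of_not_lt, show ¬ (8 ≤ t) from h, hP0] at h8
    have := hnonneg 8
    have := hnonneg 5
    have := hnonneg 3
    linarith
  have h2 := key 2
  have h5 := key 5
  simp [show (2:ℕ) ≤ t from by omega, show ¬ (3 ≤ 2) from by omega,
    show ¬ (5 ≤ 2) from by omega, show ¬ (8 ≤ 2) from by omega] at h2
  simp [show (5:ℕ) ≤ t from by omega, show ¬ (8 ≤ 5) from by omega, hP0] at h5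
  linarith [hnonneg 5]
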